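/- arXiv:2210.05016 — 3 statements merged into one kernel-verified Lean document; each statement's English description precedes it below -/
import Mathlib

section
/- The total number of leaves over all increasing trees of size n equals half the total number of vertices over all increasing trees of size n, i.e., equals n·(n-1)!/2, for n ≥ 2. -/
/-- An increasing tree of size `n`, encoded by its parent function:
the root `0` is a fixed point, and every other vertex has a smaller parent. -/
def IncTree (n : ℕ) : Type :=
  {p : Fin n → Fin n // ∀ i, (i.val = 0 ∧ p i = i) ∨ (p i).val < i.val}

/-- A vertex is a leaf if it is the parent of no non-root vertex. -/
def IsLeaf {n : ℕ} (p : Fin n → Fin n) (v : Fin n) : Prop :=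
  ∀ i, i.val ≠ 0 → p i ≠ v

lemma aux_card_sigma {ι : Type*} [Fintype ι] (f : ι → Type*) [∀ i, Finite (f i)] :
    Nat.card (Σ i, f i) = ∑ i, Nat.card (f i) := by
  classical
  haveI := fun i => Fintype.ofFinite (f i)
  rw [Nat.card_eq_fintype_card, Fintype.card_sigma]
  simp [Nat.card_eq_fintype_card]

/-- the pointwise condition for a tree with leaf `v` -/
def Q (n : ℕ) (v i j : Fin n) : Prop :=
  ((i.val = 0 ∧ j = i) ∨ j.val < i.val) ∧ (i.val ≠ 0 → j ≠ v)

lemma card_fiber (n : ℕ) (v i : Fin n) :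
    Nat.card {j : Fin n // Q n v i j} =
      if i.val = 0 then 1 else if v.val < i.val then i.val - 1 else i.val := by
  classical
  rw [Nat.card_eq_fintype_card, Fintype.card_subtype]
  by_cases hi : i.val = 0
  · have hfilter : Finset.univ.filter (Q n v i) = {i} := by
      ext j
      simp only [Finset.mem_filter, Finset.mem_univ, true_and, Finset.mem_singleton, Q]
      constructor
      · rintro ⟨h1, _⟩
        rcases h1 with ⟨_, h⟩ | h
        · exact h
        · omega
      · rintro rfl
        exact ⟨Or.inl ⟨hi, rfl⟩, fun h => absurd hi h⟩
    rw [if_pos hi, hfilter, Finset.card_singleton]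
  · rw [if_neg hi]
    by_cases hv : v.val < i.val
    · rw [if_pos hv]
      have : Finset.univ.filter (Q n v i) = (Finset.Iio i).erase v := by
        ext j
        simp only [Finset.mem_filter, Finset.mem_univ, true_and, Finset.mem_erase,
          Finset.mem_Iio, Q, Fin.lt_def]
        constructor
        · rintro ⟨h1, h2⟩
          rcases h1 with ⟨h, _⟩ | h
          · exact absurd h hi
          · exact ⟨h2 hi, h⟩
        · rintro ⟨h1, h2⟩
          exact ⟨Or.inr h2, fun _ => h1⟩
      rw [this, Finset.card_erase_of_mem (Finset.mem_Iio.mpr (show v < i from hv))]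
      have : (Finset.Iio i).card = i.val := by simp
      omega
    · rw [if_neg hv]
      have : Finset.univ.filter (Q n v i) = Finset.Iio i := by
        ext j
        simp only [Finset.mem_filter, Finset.mem_univ, true_and, Finset.mem_Iio, Q, Fin.lt_def]
        constructor
        · rintro ⟨h1, _⟩
          rcases h1 with ⟨h, _⟩ | h
          · exact absurd h hi
          · exact h
        · intro h
          refine ⟨Or.inr h, fun _ hjv => ?_⟩
          subst hjv
          omega
      rw [this]
      simp

lemma card_trees_with_leaf (n : ℕ) (hn : 2 ≤ n) (v : Fin n) :
    Nat.card {p : IncTree n // IsLeaf p.1 v} = v.val * Nat.factorial (n - 2) := by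
  classical
  -- step 1: equivalence with a Pi type
  have e : {p : IncTree n // IsLeaf p.1 v} ≃ ∀ i : Fin n, {j : Fin n // Q n v i j} := by
    refine Equiv.trans ?_ (Equiv.subtypePiEquivPi)
    refine Equiv.trans
      (Equiv.subtypeSubtypeEquivSubtypeInter
        (fun p : Fin n → Fin n => ∀ i, (i.val = 0 ∧ p i = i) ∨ (p i).val < i.val)
        (fun p => IsLeaf p v)) ?_
    refine Equiv.subtypeEquivRight (fun p => ?_)
    constructor
    · rintro ⟨h1, h2⟩ i
      exact ⟨h1 i, fun hi => h2 i hi⟩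
    · intro h
      exact ⟨fun i => (h i).1, fun i hi => (h i).2 hi⟩
  rw [Nat.card_congr e, Nat.card_pi]
  -- step 2: compute the product
  have hc : ∀ i : Fin n, Nat.card {j : Fin n // Q n v i j} =
      (fun k : ℕ => if k = 0 then 1 else if v.val < k then k - 1 else k) i.val :=
    fun i => card_fiber n v i
  set d : ℕ → ℕ := fun k => if k = 0 then 1 else if v.val < k then k - 1 else k with hd
  rw [Finset.prod_congr rfl (fun i _ => hc i), Fin.prod_univ_eq_prod_range d]
  by_cases hv0 : v.val = 0
  · -- the product contains the factor d 1 = 0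
    have h1 : (1 : ℕ) ∈ Finset.range n := Finset.mem_range.2 (by omega)
    rw [Finset.prod_eq_zero h1 (by simp [hd, hv0]), hv0, Nat.zero_mul]
  · -- v ≥ 1
    set w := v.val with hw
    have hwn : w ≤ n - 1 := by have := v.isLt; omega
    have hsplit : Finset.range n = Finset.Ico 0 n := by rw [Finset.range_eq_Ico]
    rw [hsplit, ← Finset.prod_Ico_consecutive d (by omega : (0:ℕ) ≤ 1) (by omega : 1 ≤ n),
      ← Finset.prod_Ico_consecutive d (by omega : (1:ℕ) ≤ w + 1) (by omega : w + 1 ≤ n)]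
    have h0 : ∏ k ∈ Finset.Ico 0 1, d k = 1 := by simp [hd]
    have h1 : ∏ k ∈ Finset.Ico 1 (w + 1), d k = Nat.factorial w := by
      rw [← Finset.prod_Ico_id_eq_factorial]
      refine Finset.prod_congr rfl (fun k hk => ?_)
      rw [Finset.mem_Ico] at hk
      simp only [hd]
      rw [if_neg (by omega), if_neg (by omega)]
    have h2 : ∏ k ∈ Finset.Ico (w + 1) n, d k = ∏ k ∈ Finset.Ico w (n - 1), k := by
      rw [Finset.prod_Ico_eq_prod_range, Finset.prod_Ico_eq_prod_range]
      have : n - (w + 1) = n - 1 - w := by omega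
      rw [this]
      refine Finset.prod_congr rfl (fun k hk => ?_)
      simp only [hd]
      rw [if_neg (by omega), if_pos (by omega)]
      omega
    rw [h0, h1, h2, one_mul]
    -- now : w ! * ∏ k ∈ Ico w (n-1), k = w * (n-2)!
    have key : Nat.factorial (w - 1) * ∏ k ∈ Finset.Ico w (n - 1), k = Nat.factorial (n - 2) := by
      have e1 : Nat.factorial (w - 1) = ∏ k ∈ Finset.Ico 1 w, k := by
        have h := (Finset.prod_Ico_id_eq_factorial (w - 1)).symm
        have hw1 : w - 1 + 1 = w := by omega
        rwa [hw1] at h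
      have e2 : Nat.factorial (n - 2) = ∏ k ∈ Finset.Ico 1 (n - 1), k := by
        have : n - 1 = (n - 2) + 1 := by omega
        rw [this, Finset.prod_Ico_id_eq_factorial]
      rw [e1, e2, Finset.prod_Ico_consecutive _ (by omega : (1:ℕ) ≤ w) (by omega : w ≤ n - 1)]
    have hfac : Nat.factorial w = w * Nat.factorial (w - 1) :=
      (Nat.mul_factorial_pred (by omega)).symm
    rw [hfac, Nat.mul_assoc, key]

theorem total_leaves (n : ℕ) (hn : 2 ≤ n) :
    Nat.card {tv : IncTree n × Fin n // IsLeaf tv.1.1 tv.2} = n * Nat.factorial (n - 1) / 2 := by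
  classical
  have e : {tv : IncTree n × Fin n // IsLeaf tv.1.1 tv.2} ≃
      Σ v : Fin n, {p : IncTree n // IsLeaf p.1 v} :=
    { toFun := fun x => ⟨x.1.2, x.1.1, x.2⟩
      invFun := fun x => ⟨(x.2.1, x.1), x.2.2⟩
      left_inv := fun x => rfl
      right_inv := fun x => rfl }
  haveI : Finite (IncTree n) := by unfold IncTree; infer_instance
  rw [Nat.card_congr e, aux_card_sigma]
  have : ∑ v : Fin n, Nat.card {p : IncTree n // IsLeaf p.1 v} =
      ∑ v : Fin n, v.val * Nat.factorial (n - 2) :=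
    Finset.sum_congr rfl (fun v _ => card_trees_with_leaf n hn v)
  rw [this, ← Finset.sum_mul]
  have hsum : ∑ v : Fin n, (v.val : ℕ) = ∑ i ∈ Finset.range n, i := by
    exact Fin.sum_univ_eq_sum_range (fun i => i) n
  rw [hsum]
  have hg := Finset.sum_range_id_mul_two n
  -- goal: (∑ i in range n, i) * (n-2)! = n * (n-1)! / 2
  have hfac : Nat.factorial (n - 1) = (n - 1) * Nat.factorial (n - 2) := by
    have h := (Nat.mul_factorial_pred (n := n - 1) (by omega)).symm
    have h2 : n - 1 - 1 = n - 2 := by omega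
    rw [h2] at h
    exact h
  have h2 : (∑ i ∈ Finset.range n, i) * Nat.factorial (n - 2) * 2 =
      n * Nat.factorial (n - 1) := by
    calc (∑ i ∈ Finset.range n, i) * Nat.factorial (n - 2) * 2
        = ((∑ i ∈ Finset.range n, i) * 2) * Nat.factorial (n - 2) := by ring
      _ = (n * (n - 1)) * Nat.factorial (n - 2) := by rw [hg]
      _ = n * ((n - 1) * Nat.factorial (n - 2)) := by ring
      _ = n * Nat.factorial (n - 1) := by rw [← hfac]
  omega
end

section
/- For a permutation w of {1,...,n-1} corresponding to an increasing tree T of size n under the depth-search-walk bijection, the number of leaves of T equals the number of descents of w plus 1 (equivalently, leaves correspond to positions i with w(i) > w(i+1), together with the last position). -/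
/-- The depth search walk from a vertex: visit the vertex, then recursively
explore the subtrees of its children in decreasing order of label. -/
def dfs {n : ℕ} (p : Fin n → Fin n) : ℕ → Fin n → List (Fin n)
  | 0, _ => []
  | fuel + 1, v =>
    v :: (((Finset.univ.filter fun i => p i = v ∧ i ≠ v).sort (· ≤ ·)).reverse.flatMap
      fun c => dfs p fuel c)

namespace Walk

instance {n : ℕ} (p : Fin n → Fin n) : DecidablePred (IsLeaf p) := fun v => by
  unfold IsLeaf; infer_instance

/-- descent count -/
def D {n : ℕ} (l : List (Fin n)) : ℕ :=
  ((l.zip l.tail).filter fun q => decide (q.2 < q.1)).length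

variable {n : ℕ}

lemma D_nil : D ([] : List (Fin n)) = 0 := rfl

lemma D_single (a : Fin n) : D [a] = 0 := rfl

lemma D_cons (a b : Fin n) (t : List (Fin n)) :
    D (a :: b :: t) = D (b :: t) + if b < a then 1 else 0 := by
  simp only [D, List.zip_cons_cons, List.tail_cons, List.filter_cons]
  split <;> simp_all [Nat.add_comm]

lemma D_cons_of_lt {a b : Fin n} {l : List (Fin n)} (h : l.head? = some b) (hab : a < b) :
    D (a :: l) = D l := by
  cases l with
  | nil => simp at h
  | cons c t =>
    simp only [List.head?_cons, Option.some.injEq] at h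
    subst h
    rw [D_cons, if_neg (asymm hab)]; omega

lemma D_append_lt : ∀ (l1 l2 : List (Fin n)) (a b : Fin n),
    l1.getLast? = some b → l2.head? = some a → a < b →
    D (l1 ++ l2) = D l1 + D l2 + 1 := by
  intro l1
  induction l1 with
  | nil => intro l2 a b h; simp at h
  | cons x r IH =>
    intro l2 a b hlast hhead hab
    cases r with
    | nil =>
      simp only [List.getLast?_singleton, Option.some.injEq] at hlast
      subst hlast
      cases l2 with
      | nil => simp at hhead
      | cons c t =>
        simp only [List.head?_cons, Option.some.injEq] at hhead
        subst hhead
        simp only [List.singleton_append, D_cons, if_pos hab, D_single]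
        omega
    | cons y s =>
      have hlast' : (y :: s).getLast? = some b := by
        rwa [List.getLast?_cons_cons] at hlast
      have h1 : D ((y :: s) ++ l2) = D (y :: s) + D l2 + 1 := IH l2 a b hlast' hhead hab
      have h2 : (x :: y :: s) ++ l2 = x :: y :: (s ++ l2) := by simp
      rw [h2, D_cons, D_cons]
      have h3 : y :: (s ++ l2) = (y :: s) ++ l2 := by simp
      rw [h3, h1]
      omega


section Tree

variable {p : Fin n → Fin n} (hp : ∀ i, (i.val = 0 ∧ p i = i) ∨ (p i).val < i.val)

include hp

lemma child_gt {c v : Fin n} (hc : p c = v) (hne : c ≠ v) : v < c := by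
  rcases hp c with ⟨h0, hfix⟩ | hlt
  · exact absurd (hfix.symm.trans hc) hne
  · rw [hc] at hlt; exact hlt

lemma p_le (u : Fin n) : p u ≤ u := by
  rcases hp u with ⟨_, hfix⟩ | hlt
  · exact le_of_eq hfix
  · exact le_of_lt hlt

lemma iterate_le : ∀ (m : ℕ) (u : Fin n), p^[m] u ≤ u := by
  intro m
  induction m with
  | zero => intro u; simp
  | succ m IH =>
    intro u
    rw [Function.iterate_succ_apply]
    exact le_trans (IH (p u)) (p_le hp u)

lemma mem_children {c v : Fin n} :
    c ∈ ((Finset.univ.filter fun i => p i = v ∧ i ≠ v).sort (· ≤ ·)).reverse ↔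
      (p c = v ∧ c ≠ v) := by
  simp [Finset.mem_sort]

lemma mem_dfs_ge : ∀ (fuel : ℕ) (v x : Fin n), x ∈ dfs p fuel v → v ≤ x := by
  intro fuel
  induction fuel with
  | zero => intro v x hx; simp [dfs] at hx
  | succ fuel IH =>
    intro v x hx
    rw [dfs] at hx
    rcases List.mem_cons.1 hx with rfl | hx
    · exact le_refl x
    · rcases List.mem_flatMap.1 hx with ⟨c, hc, hxc⟩
      have hc' := (mem_children hp).1 hc
      exact le_of_lt (lt_of_lt_of_le (child_gt hp hc'.1 hc'.2) (IH c x hxc))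

lemma mem_dfs_imp : ∀ (fuel : ℕ) (v x : Fin n), x ∈ dfs p fuel v →
    ∃ k < fuel, p^[k] x = v := by
  intro fuel
  induction fuel with
  | zero => intro v x hx; simp [dfs] at hx
  | succ fuel IH =>
    intro v x hx
    rw [dfs] at hx
    rcases List.mem_cons.1 hx with rfl | hx
    · exact ⟨0, Nat.succ_pos _, rfl⟩
    · rcases List.mem_flatMap.1 hx with ⟨c, hc, hxc⟩
      have hc' := (mem_children hp).1 hc
      obtain ⟨k, hk, hkx⟩ := IH c x hxc
      exact ⟨k + 1, by omega, by rw [Function.iterate_succ_apply', hkx, hc'.1]⟩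

lemma mem_dfs_of : ∀ (k fuel : ℕ) (v x : Fin n), k < fuel → p^[k] x = v →
    (∀ j < k, p^[j] x ≠ v) → x ∈ dfs p fuel v := by
  intro k
  induction k with
  | zero =>
    intro fuel v x hk hx _
    cases fuel with
    | zero => omega
    | succ fuel =>
      simp only [Function.iterate_zero_apply] at hx
      subst hx
      rw [dfs]
      exact List.mem_cons_self
  | succ k IH =>
    intro fuel v x hk hx hmin
    obtain ⟨fuel, rfl⟩ := Nat.exists_eq_succ_of_ne_zero (by omega : fuel ≠ 0)
    set u := p^[k] x with hu
    have hpu : p u = v := by rw [← hx, hu, Function.iterate_succ_apply']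
    have hune : u ≠ v := hmin k (Nat.lt_succ_self k)
    have hu_mem : u ∈ ((Finset.univ.filter fun i => p i = v ∧ i ≠ v).sort (· ≤ ·)).reverse :=
      (mem_children hp).2 ⟨hpu, hune⟩
    have hx_mem : x ∈ dfs p fuel u := by
      apply IH fuel u x (by omega) hu.symm
      intro j hj hjx
      exact hmin (j + 1) (by omega) (by rw [Function.iterate_succ_apply', hjx, hpu])
    rw [dfs]
    exact List.mem_cons_of_mem _ (List.mem_flatMap.2 ⟨u, hu_mem, hx_mem⟩)

lemma iterate_root (hn : 0 < n) : ∀ (m : ℕ) (x : Fin n), x.val ≤ m →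
    p^[m] x = ⟨0, hn⟩ := by
  intro m
  induction m with
  | zero =>
    intro x hx
    rcases hp x with ⟨h0, _⟩ | hlt
    · exact Fin.ext h0
    · omega
  | succ m IH =>
    intro x hx
    rcases hp x with ⟨h0, hfix⟩ | hlt
    · have : x = ⟨0, hn⟩ := Fin.ext h0
      subst this
      rw [Function.iterate_succ_apply, hfix, IH _ (by simp)]
    · rw [Function.iterate_succ_apply]
      exact IH _ (by omega)

lemma descend_unique {x v c c' : Fin n} {j k : ℕ} (hjk : j ≤ k)
    (hj : p^[j] x = c) (hk : p^[k] x = c') (hc : p c = v) (hc' : p c' = v)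
    (hcne : c ≠ v) (hc'ne : c' ≠ v) : c = c' := by
  obtain ⟨m, rfl⟩ := Nat.exists_eq_add_of_le hjk
  rw [Nat.add_comm, Function.iterate_add_apply, hj] at hk
  cases m with
  | zero => simpa using hk
  | succ m =>
    exfalso
    rw [Function.iterate_succ_apply, hc] at hk
    have h1 : c' ≤ v := hk ▸ iterate_le hp m v
    exact absurd (lt_of_lt_of_le (child_gt hp hc' hc'ne) h1) (lt_irrefl v)

lemma dfs_nodup : ∀ (fuel : ℕ) (v : Fin n), (dfs p fuel v).Nodup := by
  intro fuel
  induction fuel with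
  | zero => intro v; simp [dfs]
  | succ fuel IH =>
    intro v
    rw [dfs]
    refine List.Nodup.cons ?_ ?_
    · intro hv
      rcases List.mem_flatMap.1 hv with ⟨c, hc, hvc⟩
      have hc' := (mem_children hp).1 hc
      exact absurd (lt_of_lt_of_le (child_gt hp hc'.1 hc'.2) (mem_dfs_ge hp fuel c v hvc))
        (lt_irrefl v)
    · rw [List.nodup_flatMap]
      refine ⟨fun c _ => IH c, ?_⟩
      refine List.Pairwise.imp_of_mem ?_
        (List.nodup_reverse.2 (Finset.sort_nodup _ _))
      intro c c' hc hc' hne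
      have hcc := (mem_children hp).1 hc
      have hcc' := (mem_children hp).1 hc'
      intro x hx hx'
      obtain ⟨j, _, hj⟩ := mem_dfs_imp hp fuel c x hx
      obtain ⟨k, _, hk⟩ := mem_dfs_imp hp fuel c' x hx'
      rcases le_total j k with h | h
      · exact hne (descend_unique hp h hj hk hcc.1 hcc'.1 hcc.2 hcc'.2)
      · exact hne (descend_unique hp h hk hj hcc'.1 hcc.1 hcc'.2 hcc.2).symm

lemma mem_dfs_root (hn : 0 < n) (x : Fin n) : x ∈ dfs p n ⟨0, hn⟩ := by
  have hex : ∃ k, p^[k] x = ⟨0, hn⟩ := ⟨x.val, iterate_root hp hn x.val x le_rfl⟩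
  classical
  refine mem_dfs_of hp (Nat.find hex) n _ x ?_ (Nat.find_spec hex) fun j hj => Nat.find_min hex hj
  have : Nat.find hex ≤ x.val := Nat.find_min' hex (iterate_root hp hn x.val x le_rfl)
  omega

omit hp in
lemma aux_flat (f : Fin n → Bool) (B : Fin n → List (Fin n)) :
    ∀ cs : List (Fin n), cs ≠ [] →
    (∀ c ∈ cs, (B c).head? = some c) →
    (∀ c ∈ cs, ∀ x ∈ B c, c ≤ x) →
    (∀ c ∈ cs, (B c).countP f = D (B c) + 1) →
    cs.Pairwise (fun a b => b < a) →
    (cs.flatMap B).countP f = D (cs.flatMap B) + 1 ∧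
      (cs.flatMap B).head? = cs.head? := by
  intro cs
  induction cs with
  | nil => intro h; exact absurd rfl h
  | cons c cs' IH =>
    intro _ hhead hge hcount hpair
    have hBc_ne : B c ≠ [] := by
      intro h
      have := hhead c (List.mem_cons_self)
      rw [h] at this
      simp at this
    cases cs' with
    | nil =>
      have h1 : (List.flatMap B [c]) = B c := by simp
      rw [show ((c :: []).flatMap B) = B c from h1]
      exact ⟨hcount c (List.mem_cons_self), hhead c (List.mem_cons_self)⟩
    | cons c' rest =>
      have hne' : c' :: rest ≠ [] := by simp
      obtain ⟨hF', hFh'⟩ := IH hne'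
        (fun x hx => hhead x (List.mem_cons_of_mem _ hx))
        (fun x hx => hge x (List.mem_cons_of_mem _ hx))
        (fun x hx => hcount x (List.mem_cons_of_mem _ hx))
        (List.Pairwise.of_cons hpair)
      set F' := (c' :: rest).flatMap B with hF'def
      have hflat : ((c :: c' :: rest).flatMap B) = B c ++ F' := by
        simp [hF'def]
      have hb := List.getLast_mem hBc_ne
      have hbc : c ≤ (B c).getLast hBc_ne := hge c (List.mem_cons_self) _ hb
      have hc'c : c' < c := (List.pairwise_cons.1 hpair).1 c' (List.mem_cons_self)
      have hF'h : F'.head? = some c' := by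
        rw [hFh']; rfl
      have hD : D (B c ++ F') = D (B c) + D F' + 1 :=
        D_append_lt (B c) F' c' ((B c).getLast hBc_ne)
          (List.getLast?_eq_getLast hBc_ne) hF'h (lt_of_lt_of_le hc'c hbc)
      constructor
      · rw [hflat, List.countP_append, hD,
          hcount c (List.mem_cons_self), hF']
        omega
      · rw [hflat]
        cases hB : B c with
        | nil => exact absurd hB hBc_ne
        | cons y t =>
          have := hhead c (List.mem_cons_self)
          rw [hB] at this
          simpa using this

lemma dfs_cons (fuel : ℕ) (v : Fin n) (h : 0 < fuel) :
    dfs p fuel v = v :: (dfs p fuel v).tail := by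
  obtain ⟨f, rfl⟩ := Nat.exists_eq_succ_of_ne_zero h.ne'
  rw [dfs]
  rfl

omit hp in
lemma count_eq (l : List (Fin n)) (hnd : l.Nodup) (hc : ∀ x, x ∈ l)
    (q : Fin n → Prop) [DecidablePred q] :
    Nat.card {v : Fin n // q v} = l.countP (fun x => decide (q x)) := by
  rw [Nat.card_eq_fintype_card, Fintype.card_subtype]
  have h1 : (l.filter (fun x => decide (q x))).toFinset = Finset.univ.filter q := by
    ext x
    simp [List.mem_filter, hc x]
  rw [← h1, List.toFinset_card_of_nodup (hnd.filter _), List.countP_eq_length_filter]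

lemma main_count : ∀ (fuel : ℕ) (v : Fin n), n - v.val ≤ fuel →
    (dfs p fuel v).countP (fun x => decide (IsLeaf p x)) = D (dfs p fuel v) + 1 := by
  intro fuel
  induction fuel with
  | zero => intro v hv; have := v.isLt; omega
  | succ fuel IH =>
    intro v hv
    rw [dfs]
    set cs := ((Finset.univ.filter fun i => p i = v ∧ i ≠ v).sort (· ≤ ·)).reverse with hcs
    by_cases hcsnil : cs = []
    · have hleaf : IsLeaf p v := by
        intro i hi0 hpi
        have hiv : i ≠ v := by
          intro h
          subst h
          rcases hp i with ⟨h0, _⟩ | hlt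
          · exact hi0 h0
          · rw [hpi] at hlt; exact absurd hlt (lt_irrefl _)
        have : i ∈ cs := (mem_children hp).2 ⟨hpi, hiv⟩
        rw [hcsnil] at this
        simp at this
      rw [hcsnil]
      simp [D_single, hleaf]
    · -- v has children
      obtain ⟨c₀, cs₀, hcs0⟩ := List.exists_cons_of_ne_nil hcsnil
      have hmemcs : c₀ ∈ cs := hcs0 ▸ List.mem_cons_self
      have hc₀ : p c₀ = v ∧ c₀ ≠ v := (mem_children hp).1 hmemcs
      have hvc₀ : v < c₀ := child_gt hp hc₀.1 hc₀.2
      have hfuel1 : 1 ≤ fuel := by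
        have := c₀.isLt
        have : v.val < c₀.val := hvc₀
        omega
      have hchild_fuel : ∀ c ∈ cs, n - c.val ≤ fuel := by
        intro c hc
        have hc' := (mem_children hp).1 hc
        have : v.val < c.val := child_gt hp hc'.1 hc'.2
        omega
      have hhead : ∀ c ∈ cs, (dfs p fuel c).head? = some c := by
        intro c _
        obtain ⟨f', rfl⟩ := Nat.exists_eq_succ_of_ne_zero (by omega : fuel ≠ 0)
        rw [dfs]
        rfl
      obtain ⟨hF, hFh⟩ := aux_flat (fun x => decide (IsLeaf p x)) (dfs p fuel) cs hcsnil
        hhead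
        (fun c _ x hx => mem_dfs_ge hp fuel c x hx)
        (fun c hc => IH c (hchild_fuel c hc))
        (by
          rw [hcs]
          rw [List.pairwise_reverse]
          exact (Finset.sortedLT_sort _).pairwise)
      have hnotleaf : ¬ IsLeaf p v := by
        intro hleaf
        have hc0pos : c₀.val ≠ 0 := by
          have : v.val < c₀.val := hvc₀
          omega
        exact hleaf c₀ hc0pos hc₀.1
      rw [List.countP_cons]
      have hFh' : (cs.flatMap (dfs p fuel)).head? = some c₀ := by
        rw [hFh, hcs0]; rfl
      rw [D_cons_of_lt hFh' hvc₀, hF]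
      simp [hnotleaf]

end Tree

end Walk


theorem leaves_eq_descents_add_one (n : ℕ) (hn : 1 ≤ n) (t : IncTree n)
    (w : List (Fin n)) (hw : w = (dfs t.1 n ⟨0, by omega⟩).tail) :
    Nat.card {v : Fin n // IsLeaf t.1 v} =
      ((w.zip w.tail).filter fun q => decide (q.2 < q.1)).length + 1 := by
  classical
  obtain ⟨p, hp⟩ := t
  simp only at hw ⊢
  have hn0 : 0 < n := hn
  set root : Fin n := ⟨0, hn0⟩ with hroot
  set L := dfs p n root with hL
  have hmain : L.countP (fun x => decide (IsLeaf p x)) = Walk.D L + 1 :=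
    Walk.main_count hp n root (by simp [hroot])
  have hLcons : L = root :: w := by
    rw [hw]
    exact Walk.dfs_cons hp n root hn0
  have hDLw : Walk.D L = Walk.D w := by
    rw [hLcons]
    cases w with
    | nil => rfl
    | cons b tl =>
      rw [Walk.D_cons]
      have hb : ¬ b < root := by
        intro h
        have : b.val < 0 := h
        omega
      rw [if_neg hb]
      omega
  have hcard : Nat.card {v : Fin n // IsLeaf p v} =
      L.countP (fun x => decide (IsLeaf p x)) :=
    Walk.count_eq L (Walk.dfs_nodup hp n root) (Walk.mem_dfs_root hp hn0) (IsLeaf p)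
  rw [hcard, hmain, hDLw]
  rfl
end

section
/- In an increasing tree, if a vertex k has rank 1 and a new leaf is attached as a child of a child c of k, then k fails to have rank 1 in the new tree if and only if c was the unique leaf child of k; in that case k has rank 2 and c has rank 1 in the new tree. -/
/-- The rank of a vertex `v`: the minimal number of edges on a downward path
from `v` to a leaf of the subtree rooted at `v`. -/
noncomputable def rank {n : ℕ} (p : Fin n → Fin n) (v : Fin n) : ℕ :=
  sInf {d | ∃ u : Fin n, IsLeaf p u ∧ p^[d] u = v}

lemma sInf_eq_one_iff' (S : Set ℕ) : sInf S = 1 ↔ 1 ∈ S ∧ 0 ∉ S := by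
  constructor
  · intro h
    have hne : S.Nonempty := by
      rcases S.eq_empty_or_nonempty with he | hne
      · simp [he, Nat.sInf_empty] at h
      · exact hne
    refine ⟨h ▸ Nat.sInf_mem hne, fun h0 => ?_⟩
    have := Nat.sInf_le h0
    omega
  · rintro ⟨h1, h0⟩
    have hle := Nat.sInf_le h1
    have hne : sInf S ≠ 0 := fun h => h0 (h ▸ Nat.sInf_mem ⟨1, h1⟩)
    omega

theorem attach_leaf_to_child (n : ℕ) (t : IncTree n) (k c : Fin n)
    (hk : rank t.1 k = 1) (hc0 : c.val ≠ 0) (hc : t.1 c = k)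
    (q : Fin (n + 1) → Fin (n + 1))
    (hq : q = fun i =>
      if h : i.val < n then Fin.castSucc (t.1 ⟨i.val, h⟩) else Fin.castSucc c) :
    (rank q (Fin.castSucc k) ≠ 1 ↔
      (IsLeaf t.1 c ∧
        ∀ c' : Fin n, c'.val ≠ 0 → t.1 c' = k → IsLeaf t.1 c' → c' = c)) ∧
    (rank q (Fin.castSucc k) ≠ 1 →
      rank q (Fin.castSucc k) = 2 ∧ rank q (Fin.castSucc c) = 1) := by
  set p := t.1 with hp
  have hn0 : n ≠ 0 := fun h => absurd c.isLt (by omega)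
  -- computation rules for q
  have hq1 : ∀ i : Fin n, q (Fin.castSucc i) = Fin.castSucc (p i) := by
    intro i
    rw [hq]
    simp only
    rw [dif_pos (show (Fin.castSucc i).val < n from i.isLt)]
    rfl
  have hq2 : q (Fin.last n) = Fin.castSucc c := by
    rw [hq]
    simp
  have hq_cs : ∀ i : Fin (n + 1), ∃ w : Fin n, q i = Fin.castSucc w := by
    intro i
    induction i using Fin.lastCases with
    | last => exact ⟨c, hq2⟩
    | cast j => exact ⟨p j, hq1 j⟩
  -- c ≠ k
  have hck : c ≠ k := by
    rcases t.2 c with ⟨h0, _⟩ | hlt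
    · exact absurd h0 hc0
    · intro h
      rw [← hp, hc] at hlt
      have := congrArg Fin.val h
      omega
  -- facts from rank k = 1
  have hS := (sInf_eq_one_iff' _).1 hk
  obtain ⟨⟨u, hu_leaf, hu_eq⟩, h0S⟩ := hS
  rw [Function.iterate_one] at hu_eq
  have hk_not_leaf : ¬ IsLeaf p k := fun h => h0S ⟨k, h, rfl⟩
  -- last n is a leaf of q
  have hlast_leaf : IsLeaf q (Fin.last n) := by
    intro i _ hqi
    obtain ⟨w, hw⟩ := hq_cs i
    rw [hw] at hqi
    exact absurd hqi (Fin.castSucc_lt_last w).ne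
  -- leaves of q among castSucc
  have hq_leaf : ∀ v : Fin n, IsLeaf q (Fin.castSucc v) ↔ (IsLeaf p v ∧ v ≠ c) := by
    intro v
    constructor
    · intro hL
      constructor
      · intro i hi hpi
        exact hL (Fin.castSucc i) (by simpa using hi) (by rw [hq1, hpi])
      · intro h
        exact hL (Fin.last n) (by simp [hn0]) (by rw [hq2, h])
    · rintro ⟨hL, hvc⟩ i hi
      induction i using Fin.lastCases with
      | last =>
          rw [hq2]
          exact fun h => hvc (Fin.castSucc_injective n h).symm
      | cast j =>
          rw [hq1]
          exact fun h => hL j (by simpa using hi) (Fin.castSucc_injective n h)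
  -- sets
  have h0T : (0 : ℕ) ∉ {d | ∃ u : Fin (n+1), IsLeaf q u ∧ q^[d] u = Fin.castSucc k} := by
    rintro ⟨w, hw, hw2⟩
    simp only [Function.iterate_zero, id_eq] at hw2
    subst hw2
    exact hw (Fin.castSucc c) (by simpa using hc0) (by rw [hq1, hc])
  have h1T : (1 : ℕ) ∈ {d | ∃ u : Fin (n+1), IsLeaf q u ∧ q^[d] u = Fin.castSucc k} ↔
      ∃ v : Fin n, IsLeaf p v ∧ v ≠ c ∧ p v = k := by
    constructor
    · rintro ⟨w, hw, hw2⟩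
      rw [Function.iterate_one] at hw2
      induction w using Fin.lastCases with
      | last =>
          rw [hq2] at hw2
          exact absurd (Fin.castSucc_injective n hw2) hck
      | cast v =>
          rw [hq1] at hw2
          obtain ⟨hv1, hv2⟩ := (hq_leaf v).1 hw
          exact ⟨v, hv1, hv2, Fin.castSucc_injective n hw2⟩
    · rintro ⟨v, hv1, hv2, hv3⟩
      exact ⟨Fin.castSucc v, (hq_leaf v).2 ⟨hv1, hv2⟩,
        by rw [Function.iterate_one, hq1, hv3]⟩
  have hrank1 : rank q (Fin.castSucc k) = 1 ↔ ∃ v : Fin n, IsLeaf p v ∧ v ≠ c ∧ p v = k := by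
    rw [rank, sInf_eq_one_iff']
    constructor
    · rintro ⟨h1, _⟩; exact h1T.1 h1
    · intro h; exact ⟨h1T.2 h, h0T⟩
  constructor
  · rw [ne_eq, hrank1]
    constructor
    · intro hne
      push_neg at hne
      have hcuc : u = c := by
        by_contra h
        exact (hne u hu_leaf h) hu_eq
      constructor
      · exact hcuc ▸ hu_leaf
      · intro c' _ hpc' hc'leaf
        by_contra h
        exact (hne c' hc'leaf h) hpc'
    · rintro ⟨hcleaf, huniq⟩ ⟨v, hvleaf, hvc, hpv⟩
      apply hvc
      apply huniq v ?_ hpv hvleaf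
      intro hv0
      rcases t.2 v with ⟨_, hfix⟩ | hlt
      · rw [← hp] at hfix
        rw [hfix] at hpv
        exact hk_not_leaf (hpv ▸ hvleaf)
      · omega
  · intro hne
    have h2T : (2 : ℕ) ∈ {d | ∃ u : Fin (n+1), IsLeaf q u ∧ q^[d] u = Fin.castSucc k} := by
      refine ⟨Fin.last n, hlast_leaf, ?_⟩
      show q (q (Fin.last n)) = Fin.castSucc k
      rw [hq2, hq1, hc]
    constructor
    · have hmem := Nat.sInf_mem ⟨2, h2T⟩
      have hle := Nat.sInf_le h2T
      have hne0 : sInf {d | ∃ u : Fin (n+1), IsLeaf q u ∧ q^[d] u = Fin.castSucc k} ≠ 0 :=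
        fun h => h0T (h ▸ hmem)
      rw [rank] at hne ⊢
      omega
    · rw [rank, sInf_eq_one_iff']
      refine ⟨⟨Fin.last n, hlast_leaf, by rw [Function.iterate_one, hq2]⟩, ?_⟩
      rintro ⟨w, hw, hw2⟩
      simp only [Function.iterate_zero, id_eq] at hw2
      subst hw2
      exact hw (Fin.last n) (by simp [hn0]) hq2
end
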